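/- For all integers k ≥ 3 and n ≥ k, the positive co-degree Turán number of J_k satisfies (k−2)·⌊n/k⌋ ≤ co⁺ex(n, J_k) ≤ ((k−2)/(k−1))·n. -/

import Mathlib

open Finset

/-- The co-degree of a vertex set `S` in the hypergraph with edge set `E`:
the number of edges containing `S`. -/
def coDeg {n : ℕ} (E : Finset (Finset (Fin n))) (S : Finset (Fin n)) : ℕ :=
  (E.filter (fun e => S ⊆ e)).card

/-- The minimum positive co-degree `δ⁺_{r-1}` of an `r`-graph on `Fin n` with edge set `E`:
the largest `k` such that every `(r-1)`-set of vertices contained in at least one edge is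
contained in at least `k` edges (i.e. the minimum of the positive co-degrees). -/
noncomputable def minPosCoDeg (r n : ℕ) (E : Finset (Finset (Fin n))) : ℕ :=
  sInf {d : ℕ | ∃ S : Finset (Fin n), S.card = r - 1 ∧ coDeg E S = d ∧ 0 < d}

/-- `E` contains a copy of `F`: an injection of the vertices of `F` mapping
edges of `F` to edges of `E`. -/
def Contains {α β : Type*} [DecidableEq α] [DecidableEq β]
    (F : Finset (Finset α)) (E : Finset (Finset β)) : Prop :=
  ∃ f : α → β, Function.Injective f ∧ ∀ e ∈ F, e.image f ∈ E

/-- The positive co-degree Turán number `co⁺ex_r(n, F)`: the maximum of the minimum positive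
co-degree over all `F`-free `r`-graphs on `n` vertices with at least one edge. -/
noncomputable def coPlusEx {α : Type*} [DecidableEq α] (r n : ℕ) (F : Finset (Finset α)) : ℕ :=
  sSup {d : ℕ | ∃ E : Finset (Finset (Fin n)),
    (∀ e ∈ E, e.card = r) ∧ E.Nonempty ∧ ¬ Contains F E ∧ minPosCoDeg r n E = d}


def K4minus : Finset (Finset (Fin 4)) := {{0,1,2}, {0,1,3}, {0,2,3}}

def K4 : Finset (Finset (Fin 4)) := {{0,1,2}, {0,1,3}, {0,2,3}, {1,2,3}}

def F5 : Finset (Finset (Fin 5)) := {{0,1,2}, {0,1,3}, {2,3,4}}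

def F32 : Finset (Finset (Fin 5)) := {{0,1,2}, {0,3,4}, {1,3,4}, {2,3,4}}

def Fano : Finset (Finset (Fin 7)) :=
  {{0,1,2}, {2,3,4}, {0,4,5}, {1,3,5}, {0,3,6}, {1,4,6}, {2,5,6}}

def F33 : Finset (Finset (Fin 6)) :=
  {{0,1,2}, {0,3,4}, {0,3,5}, {0,4,5}, {1,3,4}, {1,3,5}, {1,4,5}, {2,3,4}, {2,3,5}, {2,4,5}}

def C5 : Finset (Finset (Fin 5)) := {{0,1,2}, {1,2,3}, {2,3,4}, {0,3,4}, {0,1,4}}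

def C5minus : Finset (Finset (Fin 5)) := {{0,1,2}, {1,2,3}, {2,3,4}, {0,3,4}}

def K222 : Finset (Finset (Fin 6)) :=
  {{0,2,4}, {0,2,5}, {0,3,4}, {0,3,5}, {1,2,4}, {1,2,5}, {1,3,4}, {1,3,5}}

/-- `J k`: the 3-graph on `k+1` vertices whose edges are all triples containing the
distinguished vertex `0`. -/
def Jgraph (k : ℕ) : Finset (Finset (Fin (k+1))) :=
  (Finset.univ.powersetCard 3).filter (fun e => (0 : Fin (k+1)) ∈ e)

/-- `E` is (isomorphic to) the complete balanced `k`-partite 3-graph on `n` vertices: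
there is a partition of the vertices into `k` classes whose sizes differ by at most one,
such that the edges are exactly the triples of vertices in three pairwise distinct classes. -/
def IsCompleteBalancedMultipartite (n k : ℕ) (E : Finset (Finset (Fin n))) : Prop :=
  ∃ f : Fin n → Fin k,
    (∀ i j : Fin k, (Finset.univ.filter (fun v => f v = i)).card ≤
      (Finset.univ.filter (fun v => f v = j)).card + 1) ∧
    ∀ e : Finset (Fin n), e ∈ E ↔ (e.card = 3 ∧ (e.image f).card = 3)

/-- The unique (6,3,2)-design `H₆`. -/
def H6 : Finset (Finset (Fin 6)) :=
  {{0,1,2}, {0,1,3}, {2,3,4}, {2,3,5}, {0,4,5}, {1,4,5}, {0,2,4}, {0,3,5}, {1,2,5}, {1,3,4}}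

/-- `E` is (isomorphic to) a balanced blow-up of `H₆` on `n` vertices: the vertices are
partitioned into six classes of equal size, and the edges are exactly the triples whose
three vertices lie in classes forming an edge of `H₆`. -/
def IsBalancedH6Blowup (n : ℕ) (E : Finset (Finset (Fin n))) : Prop :=
  ∃ f : Fin n → Fin 6,
    (∀ i j : Fin 6, (Finset.univ.filter (fun v => f v = i)).card =
      (Finset.univ.filter (fun v => f v = j)).card) ∧
    ∀ e : Finset (Fin n), e ∈ E ↔ (e.card = 3 ∧ e.image f ∈ H6)

/-- The set of third vertices extending the pair `{x,a}` to an edge. -/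
def NxSet {n : ℕ} (E : Finset (Finset (Fin n))) (x a : Fin n) : Finset (Fin n) :=
  univ.filter (fun w => insert x (insert a {w}) ∈ E ∧ w ≠ x ∧ w ≠ a)

lemma coDeg_le_NxSet {n : ℕ} (E : Finset (Finset (Fin n))) (h3 : ∀ e ∈ E, e.card = 3)
    {x a : Fin n} (hxa : x ≠ a) :
    coDeg E {x, a} ≤ (NxSet E x a).card := by
  have hsub : E.filter (fun e => ({x, a} : Finset (Fin n)) ⊆ e) ⊆
      (NxSet E x a).image (fun w => insert x (insert a {w})) := by
    intro e he
    rw [Finset.mem_filter] at he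
    obtain ⟨heE, hse⟩ := he
    have hc : e.card = 3 := h3 e heE
    have hpair : ({x, a} : Finset (Fin n)).card = 2 := by
      rw [Finset.card_insert_of_notMem (by simp [hxa]), Finset.card_singleton]
    have h1 : (e \ {x, a}).card = 1 := by
      rw [Finset.card_sdiff_of_subset hse, hc, hpair]
    obtain ⟨w, hw⟩ := Finset.card_eq_one.1 h1
    have hwm : w ∈ e \ ({x, a} : Finset (Fin n)) := hw ▸ Finset.mem_singleton_self w
    rw [Finset.mem_sdiff, Finset.mem_insert, Finset.mem_singleton] at hwm
    have hwx : w ≠ x := fun h => hwm.2 (Or.inl h)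
    have hwa : w ≠ a := fun h => hwm.2 (Or.inr h)
    have hxe : x ∈ e := hse (by simp)
    have hae : a ∈ e := hse (by simp)
    have hee : insert x (insert a ({w} : Finset (Fin n))) = e := by
      apply Finset.eq_of_subset_of_card_le
      · intro y hy
        simp only [Finset.mem_insert, Finset.mem_singleton] at hy
        rcases hy with h | h | h
        · exact h ▸ hxe
        · exact h ▸ hae
        · exact h ▸ hwm.1
      · rw [hc]
        rw [Finset.card_insert_of_notMem (by simp [hxa, Ne.symm hwx ]),
          Finset.card_insert_of_notMem (by simp [Ne.symm hwa]), Finset.card_singleton]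
    rw [Finset.mem_image]
    exact ⟨w, by simp [NxSet, hee ▸ heE, hwx, hwa], hee⟩
  calc coDeg E {x, a} ≤ _ := Finset.card_le_card hsub
    _ ≤ (NxSet E x a).card := Finset.card_image_le

lemma main_upper {k n : ℕ} (hk : 3 ≤ k) (E : Finset (Finset (Fin n)))
    (h3 : ∀ e ∈ E, e.card = 3) (hne : E.Nonempty)
    (hfree : ¬ Contains (Jgraph k) E) :
    (k - 1) * minPosCoDeg 3 n E ≤ (k - 2) * n := by
  by_contra hcon
  push_neg at hcon
  set d := minPosCoDeg 3 n E with hd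
  obtain ⟨e0, he0⟩ := hne
  obtain ⟨x, u, v, hxu, hxv, huv, he0e⟩ := Finset.card_eq_three.1 (h3 e0 he0)
  have hn3 : 3 ≤ n := by
    have h := Finset.card_le_univ e0
    rw [h3 e0 he0] at h
    simpa using h
  -- d is a lower bound for every positive codegree of a pair
  have hdle : ∀ a : Fin n, a ≠ x → (∃ e ∈ E, x ∈ e ∧ a ∈ e) → d ≤ (NxSet E x a).card := by
    rintro a hax ⟨e, heE, hxe, hae⟩
    have hxa : x ≠ a := Ne.symm hax
    have hsubs : ({x, a} : Finset (Fin n)) ⊆ e := by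
      intro y hy
      rw [Finset.mem_insert, Finset.mem_singleton] at hy
      rcases hy with h | h
      · exact h ▸ hxe
      · exact h ▸ hae
    have hpos : 0 < coDeg E {x, a} :=
      Finset.card_pos.2 ⟨e, Finset.mem_filter.2 ⟨heE, hsubs⟩⟩
    have hcard2 : ({x, a} : Finset (Fin n)).card = 2 := by
      rw [Finset.card_insert_of_notMem (by simp [hxa]), Finset.card_singleton]
    have hle : d ≤ coDeg E {x, a} := Nat.sInf_le ⟨{x, a}, hcard2, rfl, hpos⟩
    exact hle.trans (coDeg_le_NxSet E h3 hxa)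
  -- arithmetic
  have harith : ∀ j : ℕ, j ≤ k - 1 → j * (n - d) < n := by
    intro j hj
    obtain ⟨K, rfl⟩ : ∃ K, k = K + 3 := ⟨k - 3, by omega⟩
    have hj' : j ≤ K + 2 := by omega
    rcases Nat.le_total d n with h | h
    · have ht : d + (n - d) = n := by omega
      have h2 : (K + 1) * n < (K + 2) * d := by
        have : (K + 3 - 2) = K + 1 := by omega
        have h2' : (K + 3 - 1) = K + 2 := by omega
        rw [this, h2'] at hcon; exact hcon
      have h1 : (K + 2) * d + (K + 2) * (n - d) = (K + 2) * n := by
        rw [← mul_add, ht]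
      have h3' : (K + 2) * n = (K + 1) * n + n := by ring
      have hlt : (K + 2) * (n - d) < n := by linarith
      calc j * (n - d) ≤ (K + 2) * (n - d) := Nat.mul_le_mul_right _ hj'
        _ < n := hlt
    · have hzero : n - d = 0 := by omega
      rw [hzero, Nat.mul_zero]
      omega
  -- extension step
  have hext : ∀ T : Finset (Fin n), T.Nonempty → T.card ≤ k - 1 → x ∉ T →
      (∀ a ∈ T, ∃ e ∈ E, x ∈ e ∧ a ∈ e) →
      ∃ w : Fin n, w ∉ T ∧ w ≠ x ∧ ∀ a ∈ T, w ∈ NxSet E x a := by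
    intro T hTne hTc hxT hcov
    set C := univ \ T.biUnion (fun a => univ \ NxSet E x a) with hC
    have hb : (T.biUnion (fun a => univ \ NxSet E x a)).card ≤ T.card * (n - d) := by
      calc (T.biUnion (fun a => univ \ NxSet E x a)).card
          ≤ ∑ a ∈ T, (univ \ NxSet E x a).card := Finset.card_biUnion_le
        _ ≤ ∑ _a ∈ T, (n - d) := by
            apply Finset.sum_le_sum
            intro a ha
            have hax : a ≠ x := fun h => hxT (h ▸ ha)
            have hdn : d ≤ (NxSet E x a).card := hdle a hax (hcov a ha)
            rw [Finset.card_sdiff_of_subset (Finset.subset_univ _), Finset.card_univ, Fintype.card_fin]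
            omega
        _ = T.card * (n - d) := by rw [Finset.sum_const, smul_eq_mul]
    have hCcard : 0 < C.card := by
      rw [hC, Finset.card_sdiff_of_subset (Finset.subset_univ _), Finset.card_univ, Fintype.card_fin]
      have := harith T.card hTc
      omega
    obtain ⟨w, hw⟩ := Finset.card_pos.1 hCcard
    rw [hC, Finset.mem_sdiff, Finset.mem_biUnion] at hw
    push_neg at hw
    have hwN : ∀ a ∈ T, w ∈ NxSet E x a := by
      intro a ha
      have h := hw.2 a ha
      rw [Finset.mem_sdiff] at h
      push_neg at h
      exact h (Finset.mem_univ w)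
    obtain ⟨a0, ha0⟩ := hTne
    have hwx : w ≠ x := by
      have := hwN a0 ha0
      rw [NxSet, Finset.mem_filter] at this
      exact this.2.2.1
    have hwT : w ∉ T := by
      intro h
      have := hwN w h
      rw [NxSet, Finset.mem_filter] at this
      exact this.2.2.2 rfl
    exact ⟨w, hwT, hwx, hwN⟩
  -- induction: build cliques of each size
  have hind : ∀ j : ℕ, 1 ≤ j → j ≤ k → ∃ T : Finset (Fin n), T.card = j ∧ x ∉ T ∧
      (∀ a ∈ T, ∃ e ∈ E, x ∈ e ∧ a ∈ e) ∧
      (∀ a ∈ T, ∀ b ∈ T, a ≠ b → insert x (insert a {b}) ∈ E) := by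
    intro j h1
    induction j, h1 using Nat.le_induction with
    | base =>
      intro _
      refine ⟨{u}, Finset.card_singleton u, by simp [hxu], ?_, ?_⟩
      · intro a ha
        rw [Finset.mem_singleton] at ha
        subst ha
        exact ⟨e0, he0, by simp [he0e], by simp [he0e]⟩
      · intro a ha b hb hab
        rw [Finset.mem_singleton] at ha hb
        exact absurd (ha.trans hb.symm) hab
    | succ j hj ih =>
      intro hjk
      obtain ⟨T, hTc, hxT, hcov, hpairw⟩ := ih (by omega)
      have hTne : T.Nonempty := Finset.card_pos.1 (by omega)
      obtain ⟨w, hwT, hwx, hwN⟩ := hext T hTne (by omega) hxT hcov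
      have hwNx : ∀ a ∈ T, insert x (insert a {w}) ∈ E := by
        intro a ha
        have := hwN a ha
        rw [NxSet, Finset.mem_filter] at this
        exact this.2.1
      refine ⟨insert w T, ?_, ?_, ?_, ?_⟩
      · rw [Finset.card_insert_of_notMem hwT, hTc]
      · rw [Finset.mem_insert]
        push_neg
        exact ⟨Ne.symm hwx, hxT⟩
      · intro a ha
        rw [Finset.mem_insert] at ha
        rcases ha with rfl | ha
        · obtain ⟨a0, ha0⟩ := hTne
          exact ⟨insert x (insert a0 {a}), hwNx a0 ha0, by simp, by simp⟩
        · exact hcov a ha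
      · intro a ha b hb hab
        rw [Finset.mem_insert] at ha hb
        rcases ha with rfl | ha <;> rcases hb with rfl | hb
        · exact absurd rfl hab
        · rw [Finset.pair_comm]
          exact hwNx b hb
        · exact hwNx a ha
        · exact hpairw a ha b hb hab
  -- a clique of size k gives a copy of J_k
  obtain ⟨T, hTc, hxT, _, hTpair⟩ := hind k (by omega) le_rfl
  let g : Fin k → Fin n := fun i => (T.orderIsoOfFin hTc i : Fin n)
  have hg : ∀ i, g i ∈ T := fun i => (T.orderIsoOfFin hTc i).2
  have hginj : Function.Injective g := fun i j hij =>
    (T.orderIsoOfFin hTc).injective (Subtype.ext hij)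
  apply hfree
  refine ⟨Fin.cases x g, ?_, ?_⟩
  · intro i j hij
    induction i using Fin.cases with
    | zero =>
      induction j using Fin.cases with
      | zero => rfl
      | succ j =>
        simp only [Fin.cases_zero, Fin.cases_succ] at hij
        exact absurd (hij ▸ hg j) hxT
    | succ i =>
      induction j using Fin.cases with
      | zero =>
        simp only [Fin.cases_zero, Fin.cases_succ] at hij
        exact absurd (hij ▸ hg i) hxT
      | succ j =>
        simp only [Fin.cases_succ] at hij
        rw [hginj hij]
  · intro e heJ
    rw [Jgraph, Finset.mem_filter, Finset.mem_powersetCard_univ] at heJ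
    obtain ⟨hc3, h0e⟩ := heJ
    obtain ⟨i, j, hij, hi0, hj0, hei⟩ :
        ∃ i j : Fin (k+1), i ≠ j ∧ i ≠ 0 ∧ j ≠ 0 ∧ e = insert 0 (insert i {j}) := by
      obtain ⟨a, b, c, hab, hac, hbc, rfl⟩ := Finset.card_eq_three.1 hc3
      simp only [Finset.mem_insert, Finset.mem_singleton] at h0e
      rcases h0e with h | h | h
      · exact ⟨b, c, hbc, h ▸ Ne.symm hab, h ▸ Ne.symm hac, by rw [h]⟩
      · refine ⟨a, c, hac, h ▸ hab, h ▸ Ne.symm hbc, ?_⟩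
        rw [← h]
        ext y
        simp only [Finset.mem_insert, Finset.mem_singleton]
        tauto
      · refine ⟨a, b, hab, h ▸ hac, h ▸ hbc, ?_⟩
        rw [← h]
        ext y
        simp only [Finset.mem_insert, Finset.mem_singleton]
        tauto
    subst hei
    obtain ⟨i', rfl⟩ : ∃ i', i = Fin.succ i' := ⟨i.pred hi0, (Fin.succ_pred i hi0).symm⟩
    obtain ⟨j', rfl⟩ : ∃ j', j = Fin.succ j' := ⟨j.pred hj0, (Fin.succ_pred j hj0).symm⟩
    rw [Finset.image_insert, Finset.image_insert, Finset.image_singleton]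
    simp only [Fin.cases_zero, Fin.cases_succ]
    exact hTpair _ (hg i') _ (hg j')
      (fun h => hij (congrArg Fin.succ (hginj h)))


lemma construction {k n : ℕ} (hk : 3 ≤ k) (hn : k ≤ n) :
    ∃ E : Finset (Finset (Fin n)), (∀ e ∈ E, e.card = 3) ∧ E.Nonempty ∧
      ¬ Contains (Jgraph k) E ∧ (k - 2) * (n / k) ≤ minPosCoDeg 3 n E := by
  have hk0 : 0 < k := by omega
  set m := n / k with hm
  have hm1 : 1 ≤ m := (Nat.one_le_div_iff hk0).2 hn
  have hkm : k * m ≤ n := by rw [hm, mul_comm]; exact Nat.div_mul_le_self n k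
  have hfbd : ∀ v : Fin n, min ((v : ℕ) / m) (k - 1) < k :=
    fun v => lt_of_le_of_lt (min_le_right _ _) (by omega)
  set f : Fin n → Fin k := fun v => ⟨min ((v : ℕ) / m) (k - 1), hfbd v⟩ with hf
  -- value of f on explicitly presented vertices
  have hfv : ∀ (v : Fin n) (i : Fin k) (j : ℕ), j < m → (v : ℕ) = i.val * m + j → f v = i := by
    intro v i j hj hv
    apply Fin.ext
    show min ((v : ℕ) / m) (k - 1) = i.val
    rw [hv, mul_comm, Nat.mul_add_div (by omega)]
    rw [Nat.div_eq_of_lt hj, Nat.add_zero]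
    exact min_eq_left (by have := i.isLt; omega)
  -- each part has at least m vertices
  have hltn : ∀ (i : Fin k) (j : Fin m), i.val * m + j.val < n := by
    intro i j
    have h1 : (i.val + 1) * m ≤ k * m := Nat.mul_le_mul_right m (by have := i.isLt; omega)
    have h2 : (i.val + 1) * m = i.val * m + m := by ring
    have := j.isLt
    omega
  have hpart : ∀ i : Fin k, m ≤ (univ.filter (fun v => f v = i)).card := by
    intro i
    have hcard : m = (univ : Finset (Fin m)).card := by
      rw [Finset.card_univ, Fintype.card_fin]
    rw [hcard]
    apply Finset.card_le_card_of_injOn (fun j => (⟨i.val * m + j.val, hltn i j⟩ : Fin n))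
    · intro j _
      rw [Finset.mem_coe, Finset.mem_filter]
      exact ⟨Finset.mem_univ _, hfv _ i j.val j.isLt rfl⟩
    · intro j1 _ j2 _ heq
      apply Fin.ext
      have := Fin.mk.injEq (i.val * m + j1.val) (hltn i j1) (i.val * m + j2.val) (hltn i j2)
      rw [Fin.mk.injEq] at heq
      omega
  set E : Finset (Finset (Fin n)) :=
    (univ.powersetCard 3).filter (fun e => (e.image f).card = 3) with hE
  have hmemE : ∀ e : Finset (Fin n), e ∈ E ↔ e.card = 3 ∧ (e.image f).card = 3 := by
    intro e
    rw [hE, Finset.mem_filter, Finset.mem_powersetCard_univ]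
  have h3 : ∀ e ∈ E, e.card = 3 := fun e he => ((hmemE e).1 he).1
  -- nonempty
  have hEne : E.Nonempty := by
    have h0k : 0 < k := hk0
    have h1k : 1 < k := by omega
    have h2k : 2 < k := by omega
    set i0 : Fin k := ⟨0, h0k⟩
    set i1 : Fin k := ⟨1, h1k⟩
    set i2 : Fin k := ⟨2, h2k⟩
    set v0 : Fin n := ⟨0 * m + 0, hltn i0 ⟨0, by omega⟩⟩
    set v1 : Fin n := ⟨1 * m + 0, hltn i1 ⟨0, by omega⟩⟩
    set v2 : Fin n := ⟨2 * m + 0, hltn i2 ⟨0, by omega⟩⟩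
    have hf0 : f v0 = i0 := hfv v0 i0 0 (by omega) rfl
    have hf1 : f v1 = i1 := hfv v1 i1 0 (by omega) rfl
    have hf2 : f v2 = i2 := hfv v2 i2 0 (by omega) rfl
    refine ⟨{v0, v1, v2}, (hmemE _).2 ⟨?_, ?_⟩⟩
    · have h01 : v0 ≠ v1 := by rw [Fin.ne_iff_vne]; show 0*m+0 ≠ 1*m+0; omega
      have h02 : v0 ≠ v2 := by rw [Fin.ne_iff_vne]; show 0*m+0 ≠ 2*m+0; omega
      have h12 : v1 ≠ v2 := by rw [Fin.ne_iff_vne]; show 1*m+0 ≠ 2*m+0; omega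
      rw [Finset.card_insert_of_notMem (by simp [h01, h02]),
        Finset.card_insert_of_notMem (by simp [h12]), Finset.card_singleton]
    · rw [Finset.image_insert, Finset.image_insert, Finset.image_singleton, hf0, hf1, hf2]
      have h01 : i0 ≠ i1 := by rw [Fin.ne_iff_vne]; show (0:ℕ) ≠ 1; omega
      have h02 : i0 ≠ i2 := by rw [Fin.ne_iff_vne]; show (0:ℕ) ≠ 2; omega
      have h12 : i1 ≠ i2 := by rw [Fin.ne_iff_vne]; show (1:ℕ) ≠ 2; omega
      rw [Finset.card_insert_of_notMem (by simp [h01, h02]),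
        Finset.card_insert_of_notMem (by simp [h12]), Finset.card_singleton]
  -- freeness
  have hcard3 : ∀ a b c : Fin (k+1), a ≠ b → a ≠ c → b ≠ c →
      ({a, b, c} : Finset (Fin (k+1))).card = 3 := by
    intro a b c hab hac hbc
    rw [Finset.card_insert_of_notMem (by simp [hab, hac]),
      Finset.card_insert_of_notMem (by simp [hbc]), Finset.card_singleton]
  have hpairJ : ∀ i j : Fin (k+1), i ≠ j → ∃ e ∈ Jgraph k, i ∈ e ∧ j ∈ e := by
    intro i j hij
    by_cases hi : i = 0
    · subst hi
      have hj0 : (j : ℕ) ≠ 0 := fun h => hij (Fin.ext (by simp [h])).symm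
      set l : Fin (k+1) := ⟨if (j:ℕ) = 1 then 2 else 1, by split <;> omega⟩ with hl
      have h0l : (0 : Fin (k+1)) ≠ l := by
        rw [Fin.ne_iff_vne, Fin.val_zero, hl]
        by_cases h : (j:ℕ) = 1 <;> simp [h]
      have hjl : j ≠ l := by
        rw [Fin.ne_iff_vne, hl]
        by_cases h : (j:ℕ) = 1 <;> simp [h] <;> omega
      refine ⟨{0, j, l}, ?_, by simp, by simp⟩
      rw [Jgraph, Finset.mem_filter, Finset.mem_powersetCard_univ]
      exact ⟨hcard3 0 j l hij h0l hjl, by simp⟩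
    · by_cases hj : j = 0
      · subst hj
        have hi0 : (i : ℕ) ≠ 0 := fun h => hij (Fin.ext (by simp [h]))
        set l : Fin (k+1) := ⟨if (i:ℕ) = 1 then 2 else 1, by split <;> omega⟩ with hl
        have h0l : (0 : Fin (k+1)) ≠ l := by
          rw [Fin.ne_iff_vne, Fin.val_zero, hl]
          by_cases h : (i:ℕ) = 1 <;> simp [h]
        have hil : i ≠ l := by
          rw [Fin.ne_iff_vne, hl]
          by_cases h : (i:ℕ) = 1 <;> simp [h] <;> omega
        refine ⟨{0, i, l}, ?_, by simp, by simp⟩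
        rw [Jgraph, Finset.mem_filter, Finset.mem_powersetCard_univ]
        exact ⟨hcard3 0 i l (Ne.symm hi) h0l hil, by simp⟩
      · refine ⟨{0, i, j}, ?_, by simp, by simp⟩
        rw [Jgraph, Finset.mem_filter, Finset.mem_powersetCard_univ]
        exact ⟨hcard3 0 i j (Ne.symm hi) (Ne.symm hj) hij, by simp⟩
  have hfree : ¬ Contains (Jgraph k) E := by
    rintro ⟨f', hinj, hmap⟩
    have hginj : Function.Injective (fun i => f (f' i)) := by
      intro i j h
      by_contra hij
      obtain ⟨e, heJ, hie, hje⟩ := hpairJ i j hij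
      have heE := (hmemE _).1 (hmap e heJ)
      have hc3 : e.card = 3 := by
        rw [Jgraph, Finset.mem_filter, Finset.mem_powersetCard_univ] at heJ
        exact heJ.1
      have h1 : (e.image f').card = 3 := by
        rw [Finset.card_image_of_injective e hinj, hc3]
      have hInj : Set.InjOn f (e.image f') :=
        Finset.card_image_iff.1 (by rw [heE.2, h1])
      exact hij (hinj (hInj (Finset.mem_image_of_mem f' hie)
        (Finset.mem_image_of_mem f' hje) h))
    have hcard := Fintype.card_le_of_injective _ hginj
    rw [Fintype.card_fin, Fintype.card_fin] at hcard
    omega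
  -- codegree bound
  have hcodeg : ∀ S : Finset (Fin n), S.card = 2 → 0 < coDeg E S → (k - 2) * m ≤ coDeg E S := by
    intro S hS2 hpos
    obtain ⟨e, hef⟩ := Finset.card_pos.1 hpos
    rw [Finset.mem_filter] at hef
    obtain ⟨heE, hSe⟩ := hef
    obtain ⟨uu, vv, huv, rfl⟩ := Finset.card_eq_two.1 hS2
    rw [hmemE] at heE
    have hInj : Set.InjOn f e := Finset.card_image_iff.1 (by rw [heE.2, heE.1])
    have hu : uu ∈ e := hSe (by simp)
    have hv : vv ∈ e := hSe (by simp)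
    have hfuv : f uu ≠ f vv := fun h => huv (hInj hu hv h)
    set W := univ.filter (fun w => f w ≠ f uu ∧ f w ≠ f vv) with hW
    have hWcard : (k - 2) * m ≤ W.card := by
      set I := (univ : Finset (Fin k)) \ {f uu, f vv} with hI
      have hIcard : I.card = k - 2 := by
        rw [hI, Finset.card_sdiff_of_subset (Finset.subset_univ _), Finset.card_univ, Fintype.card_fin]
        congr 1
        rw [Finset.card_insert_of_notMem (by simp [hfuv]), Finset.card_singleton]
      have hmemI : ∀ w ∈ W, f w ∈ I := by
        intro w hw
        rw [hW, Finset.mem_filter] at hw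
        rw [hI, Finset.mem_sdiff]
        simp only [Finset.mem_univ, true_and, Finset.mem_insert, Finset.mem_singleton]
        push_neg
        exact ⟨hw.2.1, hw.2.2⟩
      have hfib := Finset.card_eq_sum_card_fiberwise hmemI
      rw [hfib]
      calc (k - 2) * m = ∑ _i ∈ I, m := by rw [Finset.sum_const, smul_eq_mul, hIcard]
        _ ≤ ∑ i ∈ I, (W.filter (fun v => f v = i)).card := by
            apply Finset.sum_le_sum
            intro i hi
            rw [hI, Finset.mem_sdiff] at hi
            simp only [Finset.mem_insert, Finset.mem_singleton] at hi
            push_neg at hi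
            have heq : W.filter (fun v => f v = i) = univ.filter (fun v => f v = i) := by
              ext w
              rw [hW, Finset.filter_filter]
              simp only [Finset.mem_filter, Finset.mem_univ, true_and]
              constructor
              · tauto
              · intro hw
                exact ⟨⟨hw ▸ hi.2.1, hw ▸ hi.2.2⟩, hw⟩
            rw [heq]
            exact hpart i
    have hWle : W.card ≤ coDeg E {uu, vv} := by
      apply Finset.card_le_card_of_injOn (fun w => insert w {uu, vv})
      · intro w hw
        simp only [Finset.mem_coe, hW, Finset.mem_filter] at hw
        obtain ⟨-, hwu, hwv⟩ := hw
        have hwu' : w ≠ uu := fun h => hwu (congrArg f h)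
        have hwv' : w ≠ vv := fun h => hwv (congrArg f h)
        rw [Finset.mem_coe, Finset.mem_filter]
        refine ⟨(hmemE _).2 ⟨?_, ?_⟩, ?_⟩
        · rw [Finset.card_insert_of_notMem (by simp [hwu', hwv']),
            Finset.card_insert_of_notMem (by simp [huv]), Finset.card_singleton]
        · rw [Finset.image_insert, Finset.image_insert, Finset.image_singleton]
          rw [Finset.card_insert_of_notMem (by simp [hwu, hwv]),
            Finset.card_insert_of_notMem (by simp [hfuv]), Finset.card_singleton]
        · exact Finset.subset_insert w _
      · intro w1 h1 w2 h2 heq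
        have h1' : w1 ∈ W := h1
        rw [hW, Finset.mem_filter] at h1'
        have heq' : insert w1 ({uu, vv} : Finset (Fin n)) = insert w2 {uu, vv} := heq
        have hw1 : w1 ∈ insert w2 ({uu, vv} : Finset (Fin n)) :=
          heq' ▸ Finset.mem_insert_self w1 _
        rw [Finset.mem_insert, Finset.mem_insert, Finset.mem_singleton] at hw1
        rcases hw1 with h | h | h
        · exact h
        · exact absurd (congrArg f h) h1'.2.1
        · exact absurd (congrArg f h) h1'.2.2
    exact hWcard.trans hWle
  refine ⟨E, h3, hEne, hfree, ?_⟩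
  rw [minPosCoDeg]
  apply le_csInf
  · obtain ⟨e, he⟩ := hEne
    obtain ⟨S, hSe, hS2⟩ := Finset.exists_subset_card_eq (by rw [h3 e he]; omega : (2:ℕ) ≤ e.card)
    exact ⟨coDeg E S, S, by rw [hS2], rfl,
      Finset.card_pos.2 ⟨e, Finset.mem_filter.2 ⟨he, hSe⟩⟩⟩
  · rintro b ⟨S, hS2, rfl, hpos⟩
    exact hcodeg S (by omega) hpos


/-- For all `k ≥ 3` and `n ≥ k`, `(k-2)·⌊n/k⌋ ≤ co⁺ex(n, J_k) ≤ ((k-2)/(k-1))·n`. -/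
theorem coPlusEx_Jk (k n : ℕ) (hk : 3 ≤ k) (hn : k ≤ n) :
    (k - 2) * (n / k) ≤ coPlusEx 3 n (Jgraph k) ∧
    (coPlusEx 3 n (Jgraph k) : ℝ) ≤ ((k : ℝ) - 2) / ((k : ℝ) - 1) * n := by
  obtain ⟨E0, h30, hne0, hfree0, hlb0⟩ := construction hk hn
  have hco : coPlusEx 3 n (Jgraph k) = sSup {d : ℕ | ∃ E : Finset (Finset (Fin n)),
      (∀ e ∈ E, e.card = 3) ∧ E.Nonempty ∧ ¬ Contains (Jgraph k) E ∧
      minPosCoDeg 3 n E = d} := rfl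
  set Sset := {d : ℕ | ∃ E : Finset (Finset (Fin n)),
      (∀ e ∈ E, e.card = 3) ∧ E.Nonempty ∧ ¬ Contains (Jgraph k) E ∧
      minPosCoDeg 3 n E = d} with hSset
  have hmem0 : minPosCoDeg 3 n E0 ∈ Sset := ⟨E0, h30, hne0, hfree0, rfl⟩
  have hbdd : BddAbove Sset := by
    refine ⟨Fintype.card (Finset (Fin n)), ?_⟩
    rintro b ⟨E, h3, hne, -, rfl⟩
    obtain ⟨e, he⟩ := hne
    obtain ⟨S, hSe, hS2⟩ :=
      Finset.exists_subset_card_eq (by rw [h3 e he]; omega : (2:ℕ) ≤ e.card)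
    have hpos : 0 < coDeg E S := Finset.card_pos.2 ⟨e, Finset.mem_filter.2 ⟨he, hSe⟩⟩
    have h1 : minPosCoDeg 3 n E ≤ coDeg E S := Nat.sInf_le ⟨S, by omega, rfl, hpos⟩
    have h2 : coDeg E S ≤ Fintype.card (Finset (Fin n)) := by
      refine le_trans (Finset.card_filter_le _ _) ?_
      simpa using Finset.card_le_univ E
    exact h1.trans h2
  constructor
  · calc (k - 2) * (n / k) ≤ minPosCoDeg 3 n E0 := hlb0
      _ ≤ coPlusEx 3 n (Jgraph k) := by rw [hco]; exact le_csSup hbdd hmem0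
  · have hSne : Sset.Nonempty := ⟨_, hmem0⟩
    have hsup : coPlusEx 3 n (Jgraph k) ∈ Sset := by rw [hco]; exact Nat.sSup_mem hSne hbdd
    obtain ⟨E, h3, hne, hfree, hEq⟩ := hsup
    have hmain := main_upper hk E h3 hne hfree
    rw [hEq] at hmain
    have hr : (((k - 1 : ℕ)) : ℝ) * (coPlusEx 3 n (Jgraph k)) ≤ ((k - 2 : ℕ) : ℝ) * n := by
      exact_mod_cast hmain
    rw [Nat.cast_sub (by omega : 1 ≤ k), Nat.cast_sub (by omega : 2 ≤ k)] at hr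
    push_cast at hr
    have hk1 : (0:ℝ) < (k:ℝ) - 1 := by
      have h3k : (3:ℝ) ≤ (k:ℝ) := by exact_mod_cast hk
      linarith
    rw [div_mul_eq_mul_div, le_div_iff₀ hk1]
    linarith
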